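/- arXiv:1703.04461 — 4 statements merged into one kernel-verified Lean document; each statement's English description precedes it below -/
import Mathlib

section
/- For every q > 0 there exists a constant c > 0, depending only on q, such that for every complex inner product space E and all vectors x, y ∈ E one has Re⟨‖x‖^q • x − ‖y‖^q • y, x − y⟩ ≥ c · ‖x − y‖^{q+2}. -/
lemma key_real (q a b d t : ℝ) (hq : 0 < q) (ha : 0 ≤ a) (hb : 0 ≤ b) (hd : 0 ≤ d)
    (hdab : d ≤ a + b) (hsq : d ^ 2 = a ^ 2 + b ^ 2 - 2 * t) :
    (2 : ℝ) ^ (-(q + 1)) * d ^ (q + 2) ≤ a ^ q * a ^ 2 + b ^ q * b ^ 2 - (a ^ q + b ^ q) * t := by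
  have hd2 : d ^ (q + 2) = d ^ q * d ^ 2 := by
    rw [show (q + 2 : ℝ) = q + ((2:ℕ):ℝ) by norm_num,
      Real.rpow_add' hd (by push_cast; positivity), Real.rpow_natCast]
  have h2 : 0 ≤ (a ^ q - b ^ q) * (a ^ 2 - b ^ 2) := by
    rcases le_total a b with h | h
    · exact mul_nonneg_of_nonpos_of_nonpos
        (sub_nonpos.2 (Real.rpow_le_rpow ha h hq.le))
        (sub_nonpos.2 (pow_le_pow_left₀ ha h 2))
    · exact mul_nonneg
        (sub_nonneg.2 (Real.rpow_le_rpow hb h hq.le))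
        (sub_nonneg.2 (pow_le_pow_left₀ hb h 2))
  have h3 : d ^ q ≤ 2 ^ q * (a ^ q + b ^ q) := by
    have h1 : d ^ q ≤ (2 * max a b) ^ q := by
      apply Real.rpow_le_rpow hd _ hq.le
      rcases le_total a b with h | h
      · rw [max_eq_right h]; linarith
      · rw [max_eq_left h]; linarith
    have h2' : (2 * max a b) ^ q = 2 ^ q * (max a b) ^ q :=
      Real.mul_rpow (by norm_num) (le_max_of_le_left ha)
    have h3' : (max a b) ^ q ≤ a ^ q + b ^ q := by
      rcases le_total a b with h | h
      · rw [max_eq_right h]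
        have := Real.rpow_nonneg ha q; linarith
      · rw [max_eq_left h]
        have := Real.rpow_nonneg hb q; linarith
    have h2pos : (0:ℝ) < 2 ^ q := Real.rpow_pos_of_pos (by norm_num) q
    calc d ^ q ≤ 2 ^ q * (max a b) ^ q := h2' ▸ h1
      _ ≤ 2 ^ q * (a ^ q + b ^ q) := by
          exact mul_le_mul_of_nonneg_left h3' h2pos.le
  have h4 : (2 : ℝ) ^ (-(q + 1)) * 2 ^ q = 1 / 2 := by
    rw [← Real.rpow_add (by norm_num)]
    norm_num
  have hc : (0:ℝ) < 2 ^ (-(q + 1)) := Real.rpow_pos_of_pos (by norm_num) _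
  have hdq : 0 ≤ d ^ q := Real.rpow_nonneg hd q
  have hd2' : (0:ℝ) ≤ d ^ 2 := sq_nonneg d
  have hid : a ^ q * a ^ 2 + b ^ q * b ^ 2 - (a ^ q + b ^ q) * t
      = ((a ^ q - b ^ q) * (a ^ 2 - b ^ 2) + (a ^ q + b ^ q) * d ^ 2) / 2 := by
    have ht : t = (a ^ 2 + b ^ 2 - d ^ 2) / 2 := by linarith
    rw [ht]; ring
  rw [hd2, hid]
  have step1 : (2 : ℝ) ^ (-(q + 1)) * (d ^ q * d ^ 2)
      ≤ ((a ^ q + b ^ q) / 2) * d ^ 2 := by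
    have hstep : (2 : ℝ) ^ (-(q + 1)) * d ^ q ≤ (a ^ q + b ^ q) / 2 := by
      calc (2 : ℝ) ^ (-(q + 1)) * d ^ q
          ≤ (2 : ℝ) ^ (-(q + 1)) * (2 ^ q * (a ^ q + b ^ q)) :=
            mul_le_mul_of_nonneg_left h3 hc.le
        _ = (a ^ q + b ^ q) / 2 := by rw [← mul_assoc, h4]; ring
    calc (2 : ℝ) ^ (-(q + 1)) * (d ^ q * d ^ 2)
        = ((2 : ℝ) ^ (-(q + 1)) * d ^ q) * d ^ 2 := by ring
      _ ≤ ((a ^ q + b ^ q) / 2) * d ^ 2 := mul_le_mul_of_nonneg_right hstep hd2'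
  linarith [step1, h2]

lemma expand_re (E : Type*) [NormedAddCommGroup E] [InnerProductSpace ℂ E] (x y : E) (r s : ℝ) :
    ((inner ℂ (r • x - s • y) (x - y) : ℂ)).re
      = r * ‖x‖ ^ 2 + s * ‖y‖ ^ 2 - (r + s) * (inner ℂ x y : ℂ).re := by
  have h : ∀ (c : ℝ) (u v : E), ((inner ℂ (c • u) v : ℂ)).re = c * ((inner ℂ u v : ℂ)).re := by
    intro c u v
    rw [RCLike.real_smul_eq_coe_smul (K := ℂ), inner_smul_left]
    simp [RCLike.conj_ofReal]
  have hself : ∀ u : E, ((inner ℂ u u : ℂ)).re = ‖u‖ ^ 2 := by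
    intro u
    rw [inner_self_eq_norm_sq_to_K]; norm_cast
  have hsymm : ((inner ℂ y x : ℂ)).re = ((inner ℂ x y : ℂ)).re := by
    rw [← inner_conj_symm x y, Complex.conj_re]
  simp only [inner_sub_left, inner_sub_right, Complex.sub_re, h, hself, hsymm]
  ring



/-- Pointwise strong monotonicity of the Kerr nonlinearity `x ↦ ‖x‖^q • x`:
for every `q > 0` there is `c > 0` (depending only on `q`) such that in every
complex inner product space `E`, for all `x y : E`,
`Re⟪‖x‖^q • x − ‖y‖^q • y, x − y⟫ ≥ c ‖x − y‖^(q+2)`. -/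
theorem stmt_0 (q : ℝ) (hq : 0 < q) :
    ∃ c : ℝ, 0 < c ∧
      ∀ (E : Type*) [NormedAddCommGroup E] [InnerProductSpace ℂ E] (x y : E),
        c * ‖x - y‖ ^ (q + 2) ≤
          (inner ℂ ((‖x‖ ^ q) • x - (‖y‖ ^ q) • y) (x - y) : ℂ).re := by
  refine ⟨(2 : ℝ) ^ (-(q + 1)), Real.rpow_pos_of_pos (by norm_num) _, ?_⟩
  intro E _ _ x y
  have hsq : ‖x - y‖ ^ 2 = ‖x‖ ^ 2 + ‖y‖ ^ 2 - 2 * ((inner ℂ x y : ℂ)).re := by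
    have h := norm_sub_sq (𝕜 := ℂ) x y
    simp only [RCLike.re_to_complex] at h
    linarith
  rw [expand_re]
  exact key_real q ‖x‖ ‖y‖ ‖x - y‖ ((inner ℂ x y : ℂ)).re hq (norm_nonneg _)
    (norm_nonneg _) (norm_nonneg _) (norm_sub_le x y) hsq
end

section
/- Let q > 0. There exists a constant C > 0, depending only on q, such that for every σ-finite measure space (X, μ) and all measurable functions u, v : X → ℂ⁶ with ∫_X ‖u(x)‖^{q+2} dμ(x) < ∞ and ∫_X ‖v(x)‖^{q+2} dμ(x) < ∞, one has ∫_X Re⟨‖v(x)‖^q • v(x) − ‖u(x)‖^q • u(x), u(x) − v(x)⟩ dμ(x) ≤ −C · ∫_X ‖u(x) − v(x)‖^{q+2} dμ(x). -/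
open MeasureTheory Real

lemma cross {r A B : ℝ} (hA : 0 ≤ A) (hB : 0 ≤ B) (hr : 0 ≤ r) :
    A ^ r * B ≤ A ^ (r+1) + B ^ (r+1) := by
  have h1 : A ^ (r+1) = A ^ r * A := by
    rw [Real.rpow_add' hA (by linarith : (0:ℝ) < r+1).ne', Real.rpow_one]
  have h2 : B ^ (r+1) = B ^ r * B := by
    rw [Real.rpow_add' hB (by linarith : (0:ℝ) < r+1).ne', Real.rpow_one]
  rcases le_total A B with h | h
  · calc A ^ r * B ≤ B ^ r * B :=
          mul_le_mul_of_nonneg_right (Real.rpow_le_rpow hA h hr) hB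
       _ ≤ A ^ (r+1) + B ^ (r+1) := by rw [h2]; linarith [Real.rpow_nonneg hA (r+1)]
  · calc A ^ r * B ≤ A ^ r * A :=
          mul_le_mul_of_nonneg_left h (Real.rpow_nonneg hA r)
       _ ≤ A ^ (r+1) + B ^ (r+1) := by rw [h1]; linarith [Real.rpow_nonneg hB (r+1)]

lemma key_real_s1 {q A B d c : ℝ} (hq : 0 < q) (hA : 0 ≤ A) (hB : 0 ≤ B) (hd : 0 ≤ d)
    (hdab : d ≤ A + B) (hc : c = (2:ℝ) ^ (-(q+1))) :
    (A ^ q + B ^ q) * ((A^2 + B^2 - d^2)/2) - (A ^ q * A^2 + B ^ q * B^2) ≤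
      -c * (d ^ q * d^2) := by
  have h1 : 0 ≤ (A ^ q - B ^ q) * (A^2 - B^2) := by
    rcases le_total A B with h | h
    · have := Real.rpow_le_rpow hA h hq.le
      have h2 : A^2 ≤ B^2 := by nlinarith
      nlinarith
    · have := Real.rpow_le_rpow hB h hq.le
      have h2 : B^2 ≤ A^2 := by nlinarith
      nlinarith
  have h2 : d ^ q ≤ 2 ^ q * (A ^ q + B ^ q) := by
    rcases le_total A B with h | h
    · calc d ^ q ≤ (2*B) ^ q := Real.rpow_le_rpow hd (by linarith) hq.le
        _ = 2 ^ q * B ^ q := Real.mul_rpow (by norm_num) hB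
        _ ≤ 2 ^ q * (A ^ q + B ^ q) := by
            have hp : (0:ℝ) < 2 ^ q := Real.rpow_pos_of_pos (by norm_num) q
            nlinarith [Real.rpow_nonneg hA q]
    · calc d ^ q ≤ (2*A) ^ q := Real.rpow_le_rpow hd (by linarith) hq.le
        _ = 2 ^ q * A ^ q := Real.mul_rpow (by norm_num) hA
        _ ≤ 2 ^ q * (A ^ q + B ^ q) := by
            have hp : (0:ℝ) < 2 ^ q := Real.rpow_pos_of_pos (by norm_num) q
            nlinarith [Real.rpow_nonneg hB q]
  have hC : c * (2 ^ q * 2) = 1 := by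
    rw [hc, show (2:ℝ) ^ q * 2 = 2 ^ (q+1) by
      rw [Real.rpow_add' (by norm_num) (by positivity), Real.rpow_one],
      ← Real.rpow_add (by norm_num), neg_add_cancel, Real.rpow_zero]
  have hcpos : 0 < c := hc ▸ Real.rpow_pos_of_pos (by norm_num) _
  have hd2 : (0:ℝ) ≤ d^2 := sq_nonneg d
  have h3 : c * d ^ q ≤ (A ^ q + B ^ q) / 2 := by
    have h4 : c * (2 ^ q * (A ^ q + B ^ q)) = (A ^ q + B ^ q) / 2 := by
      have h5 : c * (2 ^ q * (A ^ q + B ^ q)) = (c * (2 ^ q * 2)) * ((A ^ q + B ^ q)/2) := by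
        ring
      rw [h5, hC, one_mul]
    calc c * d ^ q ≤ c * (2 ^ q * (A ^ q + B ^ q)) :=
          mul_le_mul_of_nonneg_left h2 hcpos.le
      _ = (A ^ q + B ^ q) / 2 := h4
  nlinarith [mul_le_mul_of_nonneg_right h3 hd2]
lemma rpow_split2 {x : ℝ} (hx : 0 ≤ x) {q : ℝ} (hq : 0 < q) :
    x ^ (q + 2) = x ^ q * x ^ 2 := by
  rw [Real.rpow_add' hx (by linarith : (0:ℝ) < q + 2).ne', Real.rpow_two]

lemma key_pt (q : ℝ) (hq : 0 < q) (a b : EuclideanSpace ℂ (Fin 6)) :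
    (inner ℂ ((‖b‖ ^ q) • b - (‖a‖ ^ q) • a) (a - b) : ℂ).re ≤
      -((2:ℝ) ^ (-(q+1))) * ‖a - b‖ ^ (q + 2) := by
  have hA : (0:ℝ) ≤ ‖a‖ := norm_nonneg a
  have hB : (0:ℝ) ≤ ‖b‖ := norm_nonneg b
  have hd : (0:ℝ) ≤ ‖a - b‖ := norm_nonneg _
  have hdab : ‖a - b‖ ≤ ‖a‖ + ‖b‖ := norm_sub_le a b
  have hsq : ‖a - b‖^2 = ‖a‖^2 - 2 * (inner ℂ a b : ℂ).re + ‖b‖^2 := @norm_sub_sq ℂ _ _ _ _ a b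
  have hexp : (inner ℂ ((‖b‖ ^ q) • b - (‖a‖ ^ q) • a) (a - b) : ℂ).re
      = ‖b‖ ^ q * (inner ℂ a b : ℂ).re - ‖b‖ ^ q * ‖b‖^2
        - (‖a‖ ^ q * ‖a‖^2 - ‖a‖ ^ q * (inner ℂ a b : ℂ).re) := by
    rw [show ((‖b‖ ^ q) • b : EuclideanSpace ℂ (Fin 6)) = ((‖b‖ ^ q : ℝ) : ℂ) • b from
        RCLike.real_smul_eq_coe_smul (K := ℂ) _ _,
      show ((‖a‖ ^ q) • a : EuclideanSpace ℂ (Fin 6)) = ((‖a‖ ^ q : ℝ) : ℂ) • a from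
        RCLike.real_smul_eq_coe_smul (K := ℂ) _ _,
      inner_sub_left, inner_sub_right, inner_sub_right]
    simp only [inner_smul_left]
    have e1 : (inner ℂ b a : ℂ).re = (inner ℂ a b : ℂ).re := by
      rw [← RCLike.re_to_complex, ← RCLike.re_to_complex]; exact inner_re_symm b a
    have e2 : (inner ℂ b b : ℂ).re = ‖b‖^2 := by
      rw [← RCLike.re_to_complex]; exact inner_self_eq_norm_sq b
    have e3 : (inner ℂ a a : ℂ).re = ‖a‖^2 := by
      rw [← RCLike.re_to_complex]; exact inner_self_eq_norm_sq a
    simp only [Complex.sub_re, Complex.mul_re, Complex.conj_ofReal, Complex.ofReal_re,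
      Complex.ofReal_im, e1, e2, e3]
    ring
  rw [hexp, rpow_split2 hd hq]
  have h := key_real_s1 hq hA hB hd hdab rfl
  have heq : (‖a‖ ^ q + ‖b‖ ^ q) * ((‖a‖^2 + ‖b‖^2 - ‖a - b‖^2)/2)
      - (‖a‖ ^ q * ‖a‖^2 + ‖b‖ ^ q * ‖b‖^2)
      = ‖b‖ ^ q * (inner ℂ a b : ℂ).re - ‖b‖ ^ q * ‖b‖^2
        - (‖a‖ ^ q * ‖a‖^2 - ‖a‖ ^ q * (inner ℂ a b : ℂ).re) := by
    rw [hsq]; ring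
  linarith [h, heq]
lemma addpow {s A B : ℝ} (hs : 0 ≤ s) (hA : 0 ≤ A) (hB : 0 ≤ B) :
    (A + B) ^ s ≤ 2 ^ s * (A ^ s + B ^ s) := by
  rcases le_total A B with h | h
  · calc (A + B) ^ s ≤ (2*B) ^ s := Real.rpow_le_rpow (by linarith) (by linarith) hs
      _ = 2 ^ s * B ^ s := Real.mul_rpow (by norm_num) hB
      _ ≤ 2 ^ s * (A ^ s + B ^ s) := by
          have hp : (0:ℝ) < 2 ^ s := Real.rpow_pos_of_pos (by norm_num) s
          nlinarith [Real.rpow_nonneg hA s]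
  · calc (A + B) ^ s ≤ (2*A) ^ s := Real.rpow_le_rpow (by linarith) (by linarith) hs
      _ = 2 ^ s * A ^ s := Real.mul_rpow (by norm_num) hA
      _ ≤ 2 ^ s * (A ^ s + B ^ s) := by
          have hp : (0:ℝ) < 2 ^ s := Real.rpow_pos_of_pos (by norm_num) s
          nlinarith [Real.rpow_nonneg hB s]

lemma bound_pt (q : ℝ) (hq : 0 < q) (a b : EuclideanSpace ℂ (Fin 6)) :
    |(inner ℂ ((‖b‖ ^ q) • b - (‖a‖ ^ q) • a) (a - b) : ℂ).re| ≤
      3 * (‖a‖ ^ (q + 2) + ‖b‖ ^ (q + 2)) := by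
  have hA : (0:ℝ) ≤ ‖a‖ := norm_nonneg a
  have hB : (0:ℝ) ≤ ‖b‖ := norm_nonneg b
  have h1 : |(inner ℂ ((‖b‖ ^ q) • b - (‖a‖ ^ q) • a) (a - b) : ℂ).re| ≤
      ‖(inner ℂ ((‖b‖ ^ q) • b - (‖a‖ ^ q) • a) (a - b) : ℂ)‖ := Complex.abs_re_le_norm _
  have h2 : ‖(inner ℂ ((‖b‖ ^ q) • b - (‖a‖ ^ q) • a) (a - b) : ℂ)‖ ≤
      ‖(‖b‖ ^ q) • b - (‖a‖ ^ q) • a‖ * ‖a - b‖ := norm_inner_le_norm _ _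
  have h3 : ‖(‖b‖ ^ q) • b - (‖a‖ ^ q) • a‖ ≤ ‖b‖ ^ (q+1) + ‖a‖ ^ (q+1) := by
    calc ‖(‖b‖ ^ q) • b - (‖a‖ ^ q) • a‖ ≤ ‖(‖b‖ ^ q) • b‖ + ‖(‖a‖ ^ q) • a‖ := norm_sub_le _ _
      _ = ‖b‖ ^ q * ‖b‖ + ‖a‖ ^ q * ‖a‖ := by
          rw [norm_smul, norm_smul, Real.norm_eq_abs, Real.norm_eq_abs,
            abs_of_nonneg (Real.rpow_nonneg hB q), abs_of_nonneg (Real.rpow_nonneg hA q)]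
      _ = ‖b‖ ^ (q+1) + ‖a‖ ^ (q+1) := by
          rw [Real.rpow_add' hB (by linarith : (0:ℝ) < q+1).ne', Real.rpow_one,
            Real.rpow_add' hA (by linarith : (0:ℝ) < q+1).ne', Real.rpow_one]
  have h4 : ‖a - b‖ ≤ ‖a‖ + ‖b‖ := norm_sub_le a b
  have hq1 : (0:ℝ) ≤ q + 1 := by linarith
  have c1 : ‖a‖ ^ (q+1) * ‖b‖ ≤ ‖a‖ ^ (q+1+1) + ‖b‖ ^ (q+1+1) := cross hA hB hq1
  have c2 : ‖b‖ ^ (q+1) * ‖a‖ ≤ ‖b‖ ^ (q+1+1) + ‖a‖ ^ (q+1+1) := cross hB hA hq1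
  have e1 : ‖a‖ ^ (q+1+1) = ‖a‖ ^ (q+2) := by rw [show q+1+1 = q+2 by ring]
  have e2 : ‖b‖ ^ (q+1+1) = ‖b‖ ^ (q+2) := by rw [show q+1+1 = q+2 by ring]
  rw [e1] at c1 c2; rw [e2] at c1 c2
  have e3 : ‖a‖ ^ (q+1) * ‖a‖ = ‖a‖ ^ (q+2) := by
    rw [show q+2 = (q+1)+1 by ring, Real.rpow_add' hA (by linarith : (0:ℝ) < q+1+1).ne',
      Real.rpow_one]
  have e4 : ‖b‖ ^ (q+1) * ‖b‖ = ‖b‖ ^ (q+2) := by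
    rw [show q+2 = (q+1)+1 by ring, Real.rpow_add' hB (by linarith : (0:ℝ) < q+1+1).ne',
      Real.rpow_one]
  have hnd : (0:ℝ) ≤ ‖a - b‖ := norm_nonneg _
  have h5 : ‖(‖b‖ ^ q) • b - (‖a‖ ^ q) • a‖ * ‖a - b‖ ≤
      (‖b‖ ^ (q+1) + ‖a‖ ^ (q+1)) * (‖a‖ + ‖b‖) := by
    apply mul_le_mul h3 h4 hnd
    positivity
  nlinarith [h1, h2, h5, c1, c2, e3, e4]

/-- Monotonicity of the Kerr nonlinearity `F(u)(x) = ‖u(x)‖^q • u(x)` on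
`L^{q+2}(X, μ; ℂ⁶)`: for every `q > 0` there is a constant `C > 0` depending only
on `q` such that for every σ-finite measure space and all measurable `u, v` with
finite `L^{q+2}`-norm,
`∫ Re⟪F(v) − F(u), u − v⟫ dμ ≤ −C ∫ ‖u − v‖^(q+2) dμ`. -/
theorem stmt_1 (q : ℝ) (hq : 0 < q) :
    ∃ C : ℝ, 0 < C ∧
      ∀ (X : Type*) [MeasurableSpace X] (μ : Measure X), SigmaFinite μ →
        ∀ u v : X → EuclideanSpace ℂ (Fin 6), StronglyMeasurable u → StronglyMeasurable v →
          Integrable (fun x => ‖u x‖ ^ (q + 2)) μ →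
          Integrable (fun x => ‖v x‖ ^ (q + 2)) μ →
          ∫ x, (inner ℂ ((‖v x‖ ^ q) • v x - (‖u x‖ ^ q) • u x) (u x - v x) : ℂ).re ∂μ ≤
            -C * ∫ x, ‖u x - v x‖ ^ (q + 2) ∂μ := by
  refine ⟨(2:ℝ) ^ (-(q+1)), Real.rpow_pos_of_pos (by norm_num) _, ?_⟩
  intro X _ μ _ u v hu hv hiu hiv
  set C : ℝ := (2:ℝ) ^ (-(q+1)) with hC
  have hCpos : 0 < C := Real.rpow_pos_of_pos (by norm_num) _
  -- measurability
  have hw : StronglyMeasurable (fun x => (‖v x‖ ^ q) • v x - (‖u x‖ ^ q) • u x) :=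
    (((Real.continuous_rpow_const hq.le).comp_stronglyMeasurable hv.norm).smul hv).sub
      (((Real.continuous_rpow_const hq.le).comp_stronglyMeasurable hu.norm).smul hu)
  have hf : StronglyMeasurable
      (fun x => (inner ℂ ((‖v x‖ ^ q) • v x - (‖u x‖ ^ q) • u x) (u x - v x) : ℂ).re) :=
    Complex.continuous_re.comp_stronglyMeasurable (hw.inner (hu.sub hv))
  have hdm : StronglyMeasurable (fun x => ‖u x - v x‖ ^ (q + 2)) :=
    (Real.continuous_rpow_const (by linarith)).comp_stronglyMeasurable (hu.sub hv).norm
  -- integrability of the difference power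
  have hid : Integrable (fun x => ‖u x - v x‖ ^ (q + 2)) μ := by
    refine (((hiu.add hiv).const_mul ((2:ℝ) ^ (q+2))).mono' hdm.aestronglyMeasurable ?_)
    filter_upwards with x
    have hnn : (0:ℝ) ≤ ‖u x - v x‖ ^ (q + 2) := Real.rpow_nonneg (norm_nonneg _) _
    rw [Real.norm_eq_abs, abs_of_nonneg hnn]
    calc ‖u x - v x‖ ^ (q + 2) ≤ (‖u x‖ + ‖v x‖) ^ (q + 2) :=
          Real.rpow_le_rpow (norm_nonneg _) (norm_sub_le _ _) (by linarith)
      _ ≤ 2 ^ (q+2) * (‖u x‖ ^ (q+2) + ‖v x‖ ^ (q+2)) :=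
          addpow (by linarith) (norm_nonneg _) (norm_nonneg _)
  -- integrability of the inner product term
  have hif : Integrable
      (fun x => (inner ℂ ((‖v x‖ ^ q) • v x - (‖u x‖ ^ q) • u x) (u x - v x) : ℂ).re) μ := by
    refine ((hiu.add hiv).const_mul 3).mono' hf.aestronglyMeasurable ?_
    filter_upwards with x
    rw [Real.norm_eq_abs]
    exact bound_pt q hq (u x) (v x)
  calc ∫ x, (inner ℂ ((‖v x‖ ^ q) • v x - (‖u x‖ ^ q) • u x) (u x - v x) : ℂ).re ∂μ
      ≤ ∫ x, -C * ‖u x - v x‖ ^ (q + 2) ∂μ := by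
        refine integral_mono hif (hid.const_mul _) ?_
        intro x
        exact key_pt q hq (u x) (v x)
    _ = -C * ∫ x, ‖u x - v x‖ ^ (q + 2) ∂μ := integral_const_mul _ _
end

section
/- Let q > 0. There exists a constant C > 0, depending only on q, such that for every σ-finite measure space (X, μ) and all measurable u, v : X → ℂ⁶ with finite L^{q+2}-norm, the L^{(q+2)/(q+1)}-norm of x ↦ ‖u(x)‖^q • u(x) − ‖v(x)‖^q • v(x) is at most C · (‖u‖_{L^{q+2}}^q + ‖v‖_{L^{q+2}}^q) · ‖u − v‖_{L^{q+2}}, where ‖w‖_{L^p} := (∫_X ‖w(x)‖^p dμ)^{1/p}. -/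
open MeasureTheory

lemma aux_scalar (q : ℝ) (hq : 0 < q) {t : ℝ} (ht0 : 0 ≤ t) (ht1 : t ≤ 1) :
    (1 - t ^ q) * t ≤ (max 1 q) * (1 - t) := by
  have hm1 : (1:ℝ) ≤ max 1 q := le_max_left _ _
  rcases le_or_gt q 1 with h | h
  · rcases eq_or_lt_of_le ht0 with h0 | h0
    · rw [← h0]
      simp
    · have htq : t ≤ t ^ q := by
        calc t = t ^ (1:ℝ) := (Real.rpow_one t).symm
          _ ≤ t ^ q := Real.rpow_le_rpow_of_exponent_ge h0 ht1 h
      have h1 : 1 - t ^ q ≤ 1 - t := by linarith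
      have h2 : (1 - t ^ q) * t ≤ (1 - t) * 1 := mul_le_mul h1 ht1 ht0 (by linarith)
      nlinarith
  · have hb : 1 + q * (t - 1) ≤ t ^ q := by
      have := one_add_mul_self_le_rpow_one_add (by linarith : (-1:ℝ) ≤ t - 1) h.le
      simpa using this
    have h1 : 1 - t ^ q ≤ q * (1 - t) := by linarith
    have h2 : (1 - t ^ q) * t ≤ (q * (1 - t)) * 1 :=
      mul_le_mul h1 ht1 ht0 (by nlinarith)
    have hm2 : q ≤ max 1 q := le_max_right _ _
    nlinarith

lemma aux_scaled (q : ℝ) (hq : 0 < q) {x y : ℝ} (hy : 0 ≤ y) (hxy : y ≤ x) :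
    (x ^ q - y ^ q) * y ≤ max 1 q * (x ^ q * (x - y)) := by
  have hx : 0 ≤ x := hy.trans hxy
  rcases eq_or_lt_of_le hx with h0 | h0
  · have hy0 : y = 0 := le_antisymm (h0 ▸ hxy) hy
    rw [← h0, hy0]
    norm_num
  · set t : ℝ := y / x with htdef
    have ht0 : 0 ≤ t := div_nonneg hy h0.le
    have ht1 : t ≤ 1 := div_le_one_of_le₀ hxy hx
    have hy_eq : y = t * x := (div_mul_cancel₀ y h0.ne').symm
    have hyq : y ^ q = t ^ q * x ^ q := by
      rw [hy_eq, Real.mul_rpow ht0 hx]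
    have key := aux_scalar q hq ht0 ht1
    have hxq : 0 ≤ x ^ q := Real.rpow_nonneg hx q
    have h2 := mul_le_mul_of_nonneg_left key (mul_nonneg hxq hx)
    calc (x ^ q - y ^ q) * y = (x ^ q * x) * ((1 - t ^ q) * t) := by
          rw [hyq, hy_eq]; ring
      _ ≤ (x ^ q * x) * (max 1 q * (1 - t)) := h2
      _ = max 1 q * (x ^ q * (x - y)) := by rw [hy_eq]; ring

lemma aux_ptwise_half (q : ℝ) (hq : 0 < q) {E : Type*} [NormedAddCommGroup E]
    [NormedSpace ℝ E] (a b : E) (h : ‖b‖ ≤ ‖a‖) :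
    ‖(‖a‖ ^ q) • a - (‖b‖ ^ q) • b‖ ≤ (1 + max 1 q) * ((‖a‖ ^ q + ‖b‖ ^ q) * ‖a - b‖) := by
  have hm1 : (1:ℝ) ≤ max 1 q := le_max_left _ _
  have hid : (‖a‖ ^ q) • a - (‖b‖ ^ q) • b
      = (‖a‖ ^ q) • (a - b) + (‖a‖ ^ q - ‖b‖ ^ q) • b := by
    rw [smul_sub, sub_smul]; abel
  have haq : 0 ≤ ‖a‖ ^ q := Real.rpow_nonneg (norm_nonneg a) q
  have hbq : 0 ≤ ‖b‖ ^ q := Real.rpow_nonneg (norm_nonneg b) q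
  have hqle : ‖b‖ ^ q ≤ ‖a‖ ^ q := Real.rpow_le_rpow (norm_nonneg b) h hq.le
  have h1 : ‖(‖a‖ ^ q) • (a - b)‖ = ‖a‖ ^ q * ‖a - b‖ := by
    rw [norm_smul, Real.norm_of_nonneg haq]
  have h2 : ‖(‖a‖ ^ q - ‖b‖ ^ q) • b‖ = (‖a‖ ^ q - ‖b‖ ^ q) * ‖b‖ := by
    rw [norm_smul, Real.norm_of_nonneg (by linarith)]
  have h3 : (‖a‖ ^ q - ‖b‖ ^ q) * ‖b‖ ≤ max 1 q * (‖a‖ ^ q * (‖a‖ - ‖b‖)) :=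
    aux_scaled q hq (norm_nonneg b) h
  have h4 : ‖a‖ - ‖b‖ ≤ ‖a - b‖ := norm_sub_norm_le a b
  have h5 : max 1 q * (‖a‖ ^ q * (‖a‖ - ‖b‖)) ≤ max 1 q * (‖a‖ ^ q * ‖a - b‖) := by
    apply mul_le_mul_of_nonneg_left _ (by linarith)
    exact mul_le_mul_of_nonneg_left h4 haq
  calc ‖(‖a‖ ^ q) • a - (‖b‖ ^ q) • b‖
      ≤ ‖(‖a‖ ^ q) • (a - b)‖ + ‖(‖a‖ ^ q - ‖b‖ ^ q) • b‖ := by rw [hid]; exact norm_add_le _ _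
    _ = ‖a‖ ^ q * ‖a - b‖ + (‖a‖ ^ q - ‖b‖ ^ q) * ‖b‖ := by rw [h1, h2]
    _ ≤ ‖a‖ ^ q * ‖a - b‖ + max 1 q * (‖a‖ ^ q * ‖a - b‖) := by linarith
    _ ≤ (1 + max 1 q) * ((‖a‖ ^ q + ‖b‖ ^ q) * ‖a - b‖) := by
        have hab : 0 ≤ ‖a - b‖ := norm_nonneg _
        nlinarith [mul_nonneg (mul_nonneg (show (0:ℝ) ≤ 1 + max 1 q by linarith) hbq) hab]

lemma aux_ptwise (q : ℝ) (hq : 0 < q) {E : Type*} [NormedAddCommGroup E]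
    [NormedSpace ℝ E] (a b : E) :
    ‖(‖a‖ ^ q) • a - (‖b‖ ^ q) • b‖ ≤ (1 + max 1 q) * ((‖a‖ ^ q + ‖b‖ ^ q) * ‖a - b‖) := by
  rcases le_total ‖b‖ ‖a‖ with h | h
  · exact aux_ptwise_half q hq a b h
  · have := aux_ptwise_half q hq b a h
    rw [norm_sub_rev, norm_sub_rev b a] at this
    linarith [this]

lemma aux_add_rpow {p : ℝ} (hp : 0 ≤ p) {a b : ℝ} (ha : 0 ≤ a) (hb : 0 ≤ b) :
    (a + b) ^ p ≤ 2 ^ p * (a ^ p + b ^ p) := by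
  have h2 : (0:ℝ) ≤ 2 ^ p := Real.rpow_nonneg (by norm_num) p
  rcases le_total a b with h | h
  · calc (a + b) ^ p ≤ (2 * b) ^ p := Real.rpow_le_rpow (by linarith) (by linarith) hp
      _ = 2 ^ p * b ^ p := Real.mul_rpow (by norm_num) hb
      _ ≤ 2 ^ p * (a ^ p + b ^ p) := by nlinarith [Real.rpow_nonneg ha p]
  · calc (a + b) ^ p ≤ (2 * a) ^ p := Real.rpow_le_rpow (by linarith) (by linarith) hp
      _ = 2 ^ p * a ^ p := Real.mul_rpow (by norm_num) ha
      _ ≤ 2 ^ p * (a ^ p + b ^ p) := by nlinarith [Real.rpow_nonneg hb p]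

lemma aux_subadd {a b e : ℝ} (ha : 0 ≤ a) (hb : 0 ≤ b) (he0 : 0 ≤ e) (he1 : e ≤ 1) :
    (a + b) ^ e ≤ a ^ e + b ^ e := by
  have h := NNReal.rpow_add_le_add_rpow a.toNNReal b.toNNReal he0 he1
  have h' := NNReal.coe_le_coe.mpr h
  push_cast [NNReal.coe_rpow] at h'
  rwa [Real.coe_toNNReal a ha, Real.coe_toNNReal b hb] at h'

lemma aux_memℒp {X : Type*} [MeasurableSpace X] {μ : Measure X} {f : X → ℝ} {p : ℝ}
    (hp : 0 < p) (hm : AEStronglyMeasurable f μ) (hf0 : ∀ x, 0 ≤ f x)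
    (hi : Integrable (fun x => f x ^ p) μ) : MemLp f (ENNReal.ofReal p) μ := by
  have hne : ENNReal.ofReal p ≠ 0 := by
    simp [ENNReal.ofReal_eq_zero, not_le, hp]
  have hnt : ENNReal.ofReal p ≠ ⊤ := ENNReal.ofReal_ne_top
  have h1 : MemLp (fun x => ‖f x‖ ^ (ENNReal.ofReal p).toReal)
      (ENNReal.ofReal p / ENNReal.ofReal p) μ := by
    have e : (fun x => ‖f x‖ ^ (ENNReal.ofReal p).toReal) = fun x => f x ^ p := by
      funext x
      rw [Real.norm_of_nonneg (hf0 x), ENNReal.toReal_ofReal hp.le]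
    rw [e, ENNReal.div_self hne hnt, memLp_one_iff_integrable]
    exact hi
  exact (memLp_norm_rpow_iff hm hne hnt).mp h1

/-- Local Lipschitz estimate for the Kerr nonlinearity `F(u)(x) = ‖u(x)‖^q • u(x)`:
for every `q > 0` there is `C > 0` (depending only on `q`) such that for every
σ-finite measure space and all measurable `u, v` with finite `L^{q+2}`-norm,
`‖F(u) − F(v)‖_{L^{(q+2)/(q+1)}} ≤ C (‖u‖_{L^{q+2}}^q + ‖v‖_{L^{q+2}}^q) ‖u − v‖_{L^{q+2}}`. -/
theorem stmt_4 (q : ℝ) (hq : 0 < q) :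
    ∃ C : ℝ, 0 < C ∧
      ∀ (X : Type*) [MeasurableSpace X] (μ : Measure X), SigmaFinite μ →
        ∀ u v : X → EuclideanSpace ℂ (Fin 6), StronglyMeasurable u → StronglyMeasurable v →
          Integrable (fun x => ‖u x‖ ^ (q + 2)) μ →
          Integrable (fun x => ‖v x‖ ^ (q + 2)) μ →
          (∫ x, ‖(‖u x‖ ^ q) • u x - (‖v x‖ ^ q) • v x‖ ^ ((q + 2) / (q + 1)) ∂μ) ^
              ((q + 1) / (q + 2)) ≤
            C * (((∫ x, ‖u x‖ ^ (q + 2) ∂μ) ^ (1 / (q + 2))) ^ q +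
                  ((∫ x, ‖v x‖ ^ (q + 2) ∂μ) ^ (1 / (q + 2))) ^ q) *
              (∫ x, ‖u x - v x‖ ^ (q + 2) ∂μ) ^ (1 / (q + 2)) := by
  have hm1 : (1:ℝ) ≤ max 1 q := le_max_left _ _
  set K : ℝ := 1 + max 1 q with hKdef
  have hK : 0 < K := by positivity
  refine ⟨2 * K, by positivity, ?_⟩
  intro X _ μ _ u v hu hv Iu Iv
  have hq0 : q ≠ 0 := hq.ne'
  have hq1 : (0:ℝ) < q + 1 := by linarith
  have hq2 : (0:ℝ) < q + 2 := by linarith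
  set r : ℝ := (q + 2) / (q + 1) with hrdef
  have hr : 0 < r := by positivity
  set s : ℝ := (q + 2) / q with hsdef
  have hs : 0 < s := by positivity
  set A : X → ℝ := fun x => ‖u x‖ ^ q + ‖v x‖ ^ q with hAdef
  set B : X → ℝ := fun x => ‖u x - v x‖ with hBdef
  have hA0 : ∀ x, 0 ≤ A x := fun x =>
    add_nonneg (Real.rpow_nonneg (norm_nonneg _) q) (Real.rpow_nonneg (norm_nonneg _) q)
  have hB0 : ∀ x, 0 ≤ B x := fun x => norm_nonneg _
  -- measurability
  have mu : Measurable fun x => ‖u x‖ := hu.norm.measurable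
  have mv : Measurable fun x => ‖v x‖ := hv.norm.measurable
  have mA : Measurable A := (mu.pow measurable_const).add (mv.pow measurable_const)
  have mB : Measurable B := (hu.sub hv).norm.measurable
  -- integrability of ‖u - v‖ ^ (q+2)
  have Iuv : Integrable (fun x => B x ^ (q + 2)) μ := by
    refine Integrable.mono' (((Iu.add Iv).const_mul (2 ^ (q + 2)))) 
      (mB.pow measurable_const).aestronglyMeasurable (ae_of_all _ fun x => ?_)
    rw [Real.norm_of_nonneg (Real.rpow_nonneg (hB0 x) _)]
    calc B x ^ (q + 2) ≤ (‖u x‖ + ‖v x‖) ^ (q + 2) :=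
          Real.rpow_le_rpow (hB0 x) (norm_sub_le _ _) hq2.le
      _ ≤ 2 ^ (q + 2) * (‖u x‖ ^ (q + 2) + ‖v x‖ ^ (q + 2)) :=
          aux_add_rpow hq2.le (norm_nonneg _) (norm_nonneg _)
  -- integrability of A ^ s
  have hqs : q * s = q + 2 := by rw [hsdef]; field_simp
  have IA : Integrable (fun x => A x ^ s) μ := by
    refine Integrable.mono' (((Iu.add Iv).const_mul (2 ^ s)))
      (mA.pow measurable_const).aestronglyMeasurable (ae_of_all _ fun x => ?_)
    rw [Real.norm_of_nonneg (Real.rpow_nonneg (hA0 x) _)]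
    calc A x ^ s ≤ 2 ^ s * ((‖u x‖ ^ q) ^ s + (‖v x‖ ^ q) ^ s) :=
          aux_add_rpow hs.le (Real.rpow_nonneg (norm_nonneg _) q)
            (Real.rpow_nonneg (norm_nonneg _) q)
      _ = 2 ^ s * (‖u x‖ ^ (q + 2) + ‖v x‖ ^ (q + 2)) := by
          rw [← Real.rpow_mul (norm_nonneg _), ← Real.rpow_mul (norm_nonneg _), hqs]
  -- MemLp facts for Hölder
  have hrP : r * ((q + 1) / q) = s := by
    rw [hrdef, hsdef]
    rw [div_mul_div_comm]
    rw [div_eq_div_iff (by positivity) hq0]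
    ring
  have hrQ : r * (q + 1) = q + 2 := by
    rw [hrdef]; exact div_mul_cancel₀ _ hq1.ne'
  have MemA : MemLp (fun x => A x ^ r) (ENNReal.ofReal ((q + 1) / q)) μ := by
    refine aux_memℒp (by positivity) (mA.pow measurable_const).aestronglyMeasurable
      (fun x => Real.rpow_nonneg (hA0 x) r) ?_
    have e : (fun x => (A x ^ r) ^ ((q + 1) / q)) = fun x => A x ^ s := by
      funext x
      rw [← Real.rpow_mul (hA0 x), hrP]
    rw [e]; exact IA
  have MemB : MemLp (fun x => B x ^ r) (ENNReal.ofReal (q + 1)) μ := by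
    refine aux_memℒp (by positivity) (mB.pow measurable_const).aestronglyMeasurable
      (fun x => Real.rpow_nonneg (hB0 x) r) ?_
    have e : (fun x => (B x ^ r) ^ (q + 1)) = fun x => B x ^ (q + 2) := by
      funext x
      rw [← Real.rpow_mul (hB0 x), hrQ]
    rw [e]; exact Iuv
  -- Hölder
  have hconj : ((q + 1) / q).HolderConjugate (q + 1) := by
    rw [Real.holderConjugate_iff]; constructor
    · rw [lt_div_iff₀ hq]; linarith
    · field_simp
  have hHold := integral_mul_le_Lp_mul_Lq_of_nonneg hconj
    (ae_of_all _ fun x => Real.rpow_nonneg (hA0 x) r)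
    (ae_of_all _ fun x => Real.rpow_nonneg (hB0 x) r) MemA MemB
  have e1 : ∀ x : X, (A x ^ r) ^ ((q + 1) / q) = A x ^ s := fun x => by
    rw [← Real.rpow_mul (hA0 x), hrP]
  have e2 : ∀ x : X, (B x ^ r) ^ (q + 1) = B x ^ (q + 2) := fun x => by
    rw [← Real.rpow_mul (hB0 x), hrQ]
  simp only [e1, e2] at hHold
  -- product integrable
  have Iprod : Integrable (fun x => A x ^ r * B x ^ r) μ := by
    have hsum : (1 : ENNReal) / 1
        = 1 / ENNReal.ofReal (q + 1) + 1 / ENNReal.ofReal ((q + 1) / q) := by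
      rw [one_div, one_div, one_div, ← ENNReal.ofReal_inv_of_pos hq1,
        ← ENNReal.ofReal_inv_of_pos (by positivity : (0:ℝ) < (q+1)/q),
      ← ENNReal.ofReal_add (by positivity) (by positivity), inv_one]
      rw [show (q + 1)⁻¹ + ((q + 1) / q)⁻¹ = 1 by field_simp; ring]
      exact (ENNReal.ofReal_one).symm
    haveI : ENNReal.HolderTriple (ENNReal.ofReal (q + 1)) (ENNReal.ofReal ((q + 1) / q)) 1 :=
      ⟨by simpa [one_div] using hsum.symm⟩
    have := (MemA.smul MemB : MemLp ((fun x => B x ^ r) • (fun x => A x ^ r)) 1 μ)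
    rw [memLp_one_iff_integrable] at this
    have e : ((fun x => B x ^ r) • (fun x => A x ^ r)) = fun x => A x ^ r * B x ^ r := by
      funext x; simp [Pi.smul_apply, smul_eq_mul, mul_comm]
    rwa [e] at this
  -- pointwise bound and monotonicity
  have hptb : ∀ x, ‖(‖u x‖ ^ q) • u x - (‖v x‖ ^ q) • v x‖ ^ r
      ≤ K ^ r * (A x ^ r * B x ^ r) := fun x => by
    have h1 := aux_ptwise q hq (u x) (v x)
    calc ‖(‖u x‖ ^ q) • u x - (‖v x‖ ^ q) • v x‖ ^ r ≤ (K * (A x * B x)) ^ r :=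
          Real.rpow_le_rpow (norm_nonneg _) h1 hr.le
      _ = K ^ r * (A x ^ r * B x ^ r) := by
          rw [Real.mul_rpow hK.le (mul_nonneg (hA0 x) (hB0 x)),
            Real.mul_rpow (hA0 x) (hB0 x)]
  have step1 : (∫ x, ‖(‖u x‖ ^ q) • u x - (‖v x‖ ^ q) • v x‖ ^ r ∂μ)
      ≤ K ^ r * ∫ x, A x ^ r * B x ^ r ∂μ := by
    rw [← integral_const_mul]
    exact integral_mono_of_nonneg
      (ae_of_all _ fun x => Real.rpow_nonneg (norm_nonneg _) r)
      (Iprod.const_mul _) (ae_of_all _ hptb)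
  -- notation for the three integrals
  have hXu : 0 ≤ ∫ x, ‖u x‖ ^ (q + 2) ∂μ :=
    integral_nonneg fun x => Real.rpow_nonneg (norm_nonneg _) _
  have hXv : 0 ≤ ∫ x, ‖v x‖ ^ (q + 2) ∂μ :=
    integral_nonneg fun x => Real.rpow_nonneg (norm_nonneg _) _
  have hX1 : 0 ≤ ∫ x, A x ^ s ∂μ := integral_nonneg fun x => Real.rpow_nonneg (hA0 x) _
  have hY1 : 0 ≤ ∫ x, B x ^ (q + 2) ∂μ := integral_nonneg fun x => Real.rpow_nonneg (hB0 x) _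
  have hL0 : 0 ≤ ∫ x, ‖(‖u x‖ ^ q) • u x - (‖v x‖ ^ q) • v x‖ ^ r ∂μ :=
    integral_nonneg fun x => Real.rpow_nonneg (norm_nonneg _) _
  have chain : (∫ x, ‖(‖u x‖ ^ q) • u x - (‖v x‖ ^ q) • v x‖ ^ r ∂μ)
      ≤ K ^ r * ((∫ x, A x ^ s ∂μ) ^ (1 / ((q + 1) / q))
          * (∫ x, B x ^ (q + 2) ∂μ) ^ (1 / (q + 1))) :=
    step1.trans (mul_le_mul_of_nonneg_left hHold (by positivity))
  have hgoal1 : (∫ x, ‖(‖u x‖ ^ q) • u x - (‖v x‖ ^ q) • v x‖ ^ r ∂μ) ^ ((q + 1) / (q + 2))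
      ≤ (K ^ r * ((∫ x, A x ^ s ∂μ) ^ (1 / ((q + 1) / q))
          * (∫ x, B x ^ (q + 2) ∂μ) ^ (1 / (q + 1)))) ^ ((q + 1) / (q + 2)) :=
    Real.rpow_le_rpow hL0 chain (by positivity)
  have expand : (K ^ r * ((∫ x, A x ^ s ∂μ) ^ (1 / ((q + 1) / q))
          * (∫ x, B x ^ (q + 2) ∂μ) ^ (1 / (q + 1)))) ^ ((q + 1) / (q + 2))
      = K * ((∫ x, A x ^ s ∂μ) ^ (q / (q + 2))
          * (∫ x, B x ^ (q + 2) ∂μ) ^ (1 / (q + 2))) := by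
    rw [Real.mul_rpow (by positivity) (by positivity),
      Real.mul_rpow (by positivity) (by positivity),
      ← Real.rpow_mul hK.le, ← Real.rpow_mul hX1, ← Real.rpow_mul hY1,
      show r * ((q + 1) / (q + 2)) = 1 by rw [hrdef]; field_simp,
      show 1 / ((q + 1) / q) * ((q + 1) / (q + 2)) = q / (q + 2) by
        rw [one_div_div, div_mul_div_comm, div_eq_div_iff (by positivity) hq2.ne']; ring,
      show 1 / (q + 1) * ((q + 1) / (q + 2)) = 1 / (q + 2) by
        rw [div_mul_div_comm, div_eq_div_iff (by positivity) hq2.ne']; ring,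
      Real.rpow_one]
  have hAs_le : (∫ x, A x ^ s ∂μ)
      ≤ 2 ^ s * ((∫ x, ‖u x‖ ^ (q + 2) ∂μ) + ∫ x, ‖v x‖ ^ (q + 2) ∂μ) := by
    calc (∫ x, A x ^ s ∂μ)
        ≤ ∫ x, 2 ^ s * (‖u x‖ ^ (q + 2) + ‖v x‖ ^ (q + 2)) ∂μ := by
          refine integral_mono IA ((Iu.add Iv).const_mul _) fun x => ?_
          calc A x ^ s ≤ 2 ^ s * ((‖u x‖ ^ q) ^ s + (‖v x‖ ^ q) ^ s) :=
                aux_add_rpow hs.le (Real.rpow_nonneg (norm_nonneg _) q)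
                  (Real.rpow_nonneg (norm_nonneg _) q)
            _ = 2 ^ s * (‖u x‖ ^ (q + 2) + ‖v x‖ ^ (q + 2)) := by
                rw [← Real.rpow_mul (norm_nonneg _), ← Real.rpow_mul (norm_nonneg _), hqs]
      _ = 2 ^ s * ((∫ x, ‖u x‖ ^ (q + 2) ∂μ) + ∫ x, ‖v x‖ ^ (q + 2) ∂μ) := by
          rw [integral_const_mul, integral_add Iu Iv]
  have hexp1 : 0 ≤ q / (q + 2) := by positivity
  have hexp2 : q / (q + 2) ≤ 1 := by
    rw [div_le_one hq2]; linarith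
  have hX1e : (∫ x, A x ^ s ∂μ) ^ (q / (q + 2))
      ≤ 2 * (((∫ x, ‖u x‖ ^ (q + 2) ∂μ) ^ (1 / (q + 2))) ^ q
          + ((∫ x, ‖v x‖ ^ (q + 2) ∂μ) ^ (1 / (q + 2))) ^ q) := by
    have h1 : (∫ x, A x ^ s ∂μ) ^ (q / (q + 2))
        ≤ (2 ^ s * ((∫ x, ‖u x‖ ^ (q + 2) ∂μ) + ∫ x, ‖v x‖ ^ (q + 2) ∂μ)) ^ (q / (q + 2)) :=
      Real.rpow_le_rpow hX1 hAs_le hexp1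
    have h2 : (2 ^ s * ((∫ x, ‖u x‖ ^ (q + 2) ∂μ) + ∫ x, ‖v x‖ ^ (q + 2) ∂μ)) ^ (q / (q + 2))
        = 2 * ((∫ x, ‖u x‖ ^ (q + 2) ∂μ) + ∫ x, ‖v x‖ ^ (q + 2) ∂μ) ^ (q / (q + 2)) := by
      rw [Real.mul_rpow (by positivity) (by positivity),
        ← Real.rpow_mul (by norm_num : (0:ℝ) ≤ 2),
        show s * (q / (q + 2)) = 1 by rw [hsdef]; field_simp,
        Real.rpow_one]
    have h3 : ((∫ x, ‖u x‖ ^ (q + 2) ∂μ) + ∫ x, ‖v x‖ ^ (q + 2) ∂μ) ^ (q / (q + 2))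
        ≤ (∫ x, ‖u x‖ ^ (q + 2) ∂μ) ^ (q / (q + 2))
          + (∫ x, ‖v x‖ ^ (q + 2) ∂μ) ^ (q / (q + 2)) :=
      aux_subadd hXu hXv hexp1 hexp2
    have h4u : (∫ x, ‖u x‖ ^ (q + 2) ∂μ) ^ (q / (q + 2))
        = ((∫ x, ‖u x‖ ^ (q + 2) ∂μ) ^ (1 / (q + 2))) ^ q := by
      rw [← Real.rpow_mul hXu]; congr 1; ring
    have h4v : (∫ x, ‖v x‖ ^ (q + 2) ∂μ) ^ (q / (q + 2))
        = ((∫ x, ‖v x‖ ^ (q + 2) ∂μ) ^ (1 / (q + 2))) ^ q := by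
      rw [← Real.rpow_mul hXv]; congr 1; ring
    rw [← h4u, ← h4v]
    calc (∫ x, A x ^ s ∂μ) ^ (q / (q + 2))
        ≤ 2 * ((∫ x, ‖u x‖ ^ (q + 2) ∂μ) + ∫ x, ‖v x‖ ^ (q + 2) ∂μ) ^ (q / (q + 2)) :=
          h1.trans (le_of_eq h2)
      _ ≤ 2 * ((∫ x, ‖u x‖ ^ (q + 2) ∂μ) ^ (q / (q + 2))
            + (∫ x, ‖v x‖ ^ (q + 2) ∂μ) ^ (q / (q + 2))) := by linarith
  have hY1e : 0 ≤ (∫ x, B x ^ (q + 2) ∂μ) ^ (1 / (q + 2)) := Real.rpow_nonneg hY1 _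
  calc (∫ x, ‖(‖u x‖ ^ q) • u x - (‖v x‖ ^ q) • v x‖ ^ ((q + 2) / (q + 1)) ∂μ)
        ^ ((q + 1) / (q + 2))
      ≤ K * ((∫ x, A x ^ s ∂μ) ^ (q / (q + 2))
          * (∫ x, B x ^ (q + 2) ∂μ) ^ (1 / (q + 2))) := by
        rw [← expand]; exact hgoal1
    _ ≤ K * ((2 * (((∫ x, ‖u x‖ ^ (q + 2) ∂μ) ^ (1 / (q + 2))) ^ q
          + ((∫ x, ‖v x‖ ^ (q + 2) ∂μ) ^ (1 / (q + 2))) ^ q))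
          * (∫ x, B x ^ (q + 2) ∂μ) ^ (1 / (q + 2))) :=
        mul_le_mul_of_nonneg_left (mul_le_mul_of_nonneg_right hX1e hY1e) hK.le
    _ = 2 * K * (((∫ x, ‖u x‖ ^ (q + 2) ∂μ) ^ (1 / (q + 2))) ^ q
          + ((∫ x, ‖v x‖ ^ (q + 2) ∂μ) ^ (1 / (q + 2))) ^ q)
          * (∫ x, ‖u x - v x‖ ^ (q + 2) ∂μ) ^ (1 / (q + 2)) := by
        rw [hBdef]; ring
end

section
/- Let q > 1, let n ≥ 1, and let F : ℂⁿ → ℂⁿ be given by F(x) = ‖x‖^q • x, regarded as a map between ℝ-normed spaces. Then at every x ≠ 0 the map F is twice real Fréchet differentiable with second derivative F''(x)(v, w) = q‖x‖^{q−2} ( (q−2)‖x‖^{−2} Re⟨x, w⟩ Re⟨x, v⟩ • x + Re⟨w, v⟩ • x + Re⟨x, w⟩ • v + Re⟨x, v⟩ • w ), and there is a constant C > 0 depending only on q such that ‖F''(x)(v, v)‖ ≤ C ‖x‖^{q−1} ‖v‖² for all x ≠ 0 and all v ∈ ℂⁿ. -/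
noncomputable section KerrAux

variable {n : ℕ}

private lemma kerr_reinner (a b : EuclideanSpace ℂ (Fin n)) :
    (inner ℝ a b : ℝ) = (inner ℂ a b : ℂ).re := by
  simp [PiLp.inner_apply, RCLike.inner_apply, Complex.re_sum]

private lemma kerr_norm_rpow (q : ℝ) (y : EuclideanSpace ℂ (Fin n)) :
    ‖y‖ ^ q = ((‖y‖ ^ 2 : ℝ)) ^ (q / 2) := by
  rw [← Real.rpow_natCast ‖y‖ 2, ← Real.rpow_mul (norm_nonneg y)]
  norm_num
  ring_nf

private lemma kerr_hasFDerivAt_normsq (y : EuclideanSpace ℂ (Fin n)) :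
    HasFDerivAt (fun z : EuclideanSpace ℂ (Fin n) => (‖z‖ ^ 2 : ℝ))
      ((2 : ℝ) • (innerSL ℝ y)) y := by
  simpa [two_smul] using (hasFDerivAt_id y).norm_sq

private def kerrT (n : ℕ) : EuclideanSpace ℂ (Fin n) →L[ℝ] EuclideanSpace ℂ (Fin n) →L[ℝ]
    (EuclideanSpace ℂ (Fin n) →L[ℝ] EuclideanSpace ℂ (Fin n)) :=
  (ContinuousLinearMap.smulRightL ℝ (EuclideanSpace ℂ (Fin n)) (EuclideanSpace ℂ (Fin n))).comp
    (innerSL ℝ)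

@[simp] private lemma kerrT_apply (a b c : EuclideanSpace ℂ (Fin n)) :
    kerrT n a b c = (inner ℝ a c : ℝ) • b := rfl

private lemma kerrT_eq (a b : EuclideanSpace ℂ (Fin n)) :
    kerrT n a b = (innerSL ℝ a).smulRight b := rfl

private lemma kerr_deriv1 (q : ℝ) {y : EuclideanSpace ℂ (Fin n)} (hy : y ≠ 0) :
    HasFDerivAt (fun z : EuclideanSpace ℂ (Fin n) => (‖z‖ ^ q) • z)
      (((‖y‖ ^ 2 : ℝ) ^ (q / 2)) • ContinuousLinearMap.id ℝ (EuclideanSpace ℂ (Fin n)) +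
        (q * (‖y‖ ^ 2 : ℝ) ^ (q / 2 - 1)) • kerrT n y y) y := by
  have hy2 : (‖y‖ ^ 2 : ℝ) ≠ 0 := pow_ne_zero 2 (norm_ne_zero_iff.mpr hy)
  have hfun : (fun z : EuclideanSpace ℂ (Fin n) => (‖z‖ ^ q) • z)
      = fun z => ((‖z‖ ^ 2 : ℝ) ^ (q / 2)) • z := funext fun z => by rw [kerr_norm_rpow]
  rw [hfun]
  have hs := ((kerr_hasFDerivAt_normsq y).rpow_const (Or.inl hy2) (p := q / 2))
  refine HasFDerivAt.congr_fderiv (hs.smul (hasFDerivAt_id y)) ?_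
  apply ContinuousLinearMap.ext; intro w
  simp only [ContinuousLinearMap.add_apply, ContinuousLinearMap.smul_apply,
    ContinuousLinearMap.id_apply, ContinuousLinearMap.smulRight_apply, innerSL_apply_apply,
    kerrT_apply, smul_smul, nsmul_eq_mul, Nat.cast_ofNat, id_eq, smul_eq_mul]
  module

theorem kerr_second_deriv (q : ℝ) {x : EuclideanSpace ℂ (Fin n)} (hx : x ≠ 0) :
    ∃ f'' : EuclideanSpace ℂ (Fin n) →L[ℝ]
        EuclideanSpace ℂ (Fin n) →L[ℝ] EuclideanSpace ℂ (Fin n),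
      HasFDerivAt (fderiv ℝ (fun y : EuclideanSpace ℂ (Fin n) => (‖y‖ ^ q) • y)) f'' x ∧
      ∀ v w, f'' v w = (q * ‖x‖ ^ (q - 2)) •
        (((q - 2) * ‖x‖ ^ (-2 : ℝ) * (inner ℂ x w : ℂ).re * (inner ℂ x v : ℂ).re) • x +
          (inner ℂ w v : ℂ).re • x + (inner ℂ x w : ℂ).re • v + (inner ℂ x v : ℂ).re • w) := by
  have hx0 : (0 : ℝ) < ‖x‖ := norm_pos_iff.mpr hx
  have hx2 : (‖x‖ ^ 2 : ℝ) ≠ 0 := pow_ne_zero 2 hx0.ne'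
  have hr := kerr_hasFDerivAt_normsq x
  have hs := hr.rpow_const (Or.inl hx2) (p := q / 2)
  have hG1 := hs.smul_const (ContinuousLinearMap.id ℝ (EuclideanSpace ℂ (Fin n)))
  have hc := (hr.rpow_const (Or.inl hx2) (p := q / 2 - 1)).const_mul q
  have hdiag : HasFDerivAt (fun z : EuclideanSpace ℂ (Fin n) => (z, z))
      ((ContinuousLinearMap.id ℝ (EuclideanSpace ℂ (Fin n))).prod
        (ContinuousLinearMap.id ℝ (EuclideanSpace ℂ (Fin n)))) x :=
    (hasFDerivAt_id x).prodMk (hasFDerivAt_id x)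
  have hB : HasFDerivAt (fun z : EuclideanSpace ℂ (Fin n) => kerrT n z z)
      ((((kerrT n).isBoundedBilinearMap).deriv (x, x)).comp
        ((ContinuousLinearMap.id ℝ (EuclideanSpace ℂ (Fin n))).prod
          (ContinuousLinearMap.id ℝ (EuclideanSpace ℂ (Fin n))))) x := by
    exact HasFDerivAt.comp (f := fun z : EuclideanSpace ℂ (Fin n) => (z, z)) x
      (((kerrT n).isBoundedBilinearMap).hasFDerivAt (x, x)) hdiag
  have hG2 := hc.smul hB
  have hG := hG1.add hG2
  have hev : (fderiv ℝ (fun y : EuclideanSpace ℂ (Fin n) => (‖y‖ ^ q) • y)) =ᶠ[nhds x]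
      (fun z => ((‖z‖ ^ 2 : ℝ) ^ (q / 2)) • ContinuousLinearMap.id ℝ (EuclideanSpace ℂ (Fin n))
        + (q * (‖z‖ ^ 2 : ℝ) ^ (q / 2 - 1)) • kerrT n z z) := by
    filter_upwards [eventually_ne_nhds hx] with z hz
    exact (kerr_deriv1 q hz).fderiv
  refine ⟨_, hG.congr_of_eventuallyEq hev, ?_⟩
  intro v w
  have e1 : ((‖x‖ ^ 2 : ℝ)) ^ (q / 2 - 1) = ‖x‖ ^ (q - 2) := by
    rw [← Real.rpow_natCast ‖x‖ 2, ← Real.rpow_mul (norm_nonneg x)]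
    norm_num
    ring_nf
  have e2 : ((‖x‖ ^ 2 : ℝ)) ^ (q / 2 - 1 - 1) = ‖x‖ ^ (q - 2) * ‖x‖ ^ (-2 : ℝ) := by
    rw [← Real.rpow_natCast ‖x‖ 2, ← Real.rpow_mul (norm_nonneg x),
      ← Real.rpow_add hx0]
    norm_num
    ring_nf
  rw [← kerr_reinner x w, ← kerr_reinner x v, ← kerr_reinner w v, real_inner_comm v w]
  simp only [ContinuousLinearMap.add_apply, ContinuousLinearMap.smul_apply,
    ContinuousLinearMap.smulRight_apply, ContinuousLinearMap.comp_apply,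
    ContinuousLinearMap.prod_apply, ContinuousLinearMap.id_apply,
    IsBoundedBilinearMap.deriv_apply, innerSL_apply_apply, kerrT_apply,
    smul_smul, nsmul_eq_mul, Nat.cast_ofNat, id_eq, smul_eq_mul]
  rw [e1, e2]
  module

end KerrAux

/-- Second-order real Fréchet differentiability of the Kerr nonlinearity
`F(x) = ‖x‖^q • x` on ℂⁿ for `q > 1`: at `x ≠ 0`,
`F''(x)(v,w) = q‖x‖^{q−2}((q−2)‖x‖^{−2} Re⟪x,w⟫ Re⟪x,v⟫ • x + Re⟪w,v⟫ • x
  + Re⟪x,w⟫ • v + Re⟪x,v⟫ • w)`,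
and `‖F''(x)(v,v)‖ ≤ C ‖x‖^{q−1} ‖v‖²` with `C > 0` depending only on `q`. -/
theorem stmt_6 (q : ℝ) (hq : 1 < q) (n : ℕ) (hn : 1 ≤ n) :
    (∀ x : EuclideanSpace ℂ (Fin n), x ≠ 0 →
      ∃ f'' : EuclideanSpace ℂ (Fin n) →L[ℝ]
          EuclideanSpace ℂ (Fin n) →L[ℝ] EuclideanSpace ℂ (Fin n),
        HasFDerivAt (fderiv ℝ (fun y : EuclideanSpace ℂ (Fin n) => (‖y‖ ^ q) • y)) f'' x ∧
        ∀ v w, f'' v w = (q * ‖x‖ ^ (q - 2)) •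
          (((q - 2) * ‖x‖ ^ (-2 : ℝ) * (inner ℂ x w : ℂ).re * (inner ℂ x v : ℂ).re) • x +
            (inner ℂ w v : ℂ).re • x + (inner ℂ x w : ℂ).re • v + (inner ℂ x v : ℂ).re • w)) ∧
    ∃ C : ℝ, 0 < C ∧ ∀ x : EuclideanSpace ℂ (Fin n), x ≠ 0 →
      ∀ v : EuclideanSpace ℂ (Fin n),
        ‖fderiv ℝ (fderiv ℝ (fun y : EuclideanSpace ℂ (Fin n) => (‖y‖ ^ q) • y)) x v v‖ ≤
          C * ‖x‖ ^ (q - 1) * ‖v‖ ^ 2 := by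
  have hq0 : (0 : ℝ) < q := lt_trans one_pos hq
  constructor
  · intro x hx
    exact kerr_second_deriv q hx
  · refine ⟨q * (|q - 2| + 3), by positivity, ?_⟩
    intro x hx v
    obtain ⟨f'', hf, hform⟩ := kerr_second_deriv (n := n) q hx
    rw [hf.fderiv, hform v v]
    have hx0 : (0 : ℝ) < ‖x‖ := norm_pos_iff.mpr hx
    set s := ‖x‖ with hs
    set t := ‖v‖ with ht
    set a := (inner ℂ x v : ℂ).re with hadef
    have ha : |a| ≤ s * t := by
      rw [hadef, ← kerr_reinner]
      exact abs_real_inner_le_norm x v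
    have ha2 : a ^ 2 ≤ (s * t) ^ 2 := by
      rw [← sq_abs a]
      exact pow_le_pow_left₀ (abs_nonneg a) ha 2
    have hvv : (inner ℂ v v : ℂ).re = t ^ 2 := by
      rw [← kerr_reinner]; exact real_inner_self_eq_norm_sq v
    have hsinv : s ^ (-2 : ℝ) = (s * s)⁻¹ := by
      rw [Real.rpow_neg (norm_nonneg x), Real.rpow_two, sq]
    have hA1 : ‖((q - 2) * s ^ (-2 : ℝ) * a * a) • x‖ ≤ |q - 2| * (t ^ 2 * s) := by
      rw [norm_smul, Real.norm_eq_abs, ← hs]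
      have h1 : (s * s)⁻¹ * a ^ 2 ≤ t ^ 2 := by
        rw [inv_mul_le_iff₀ (by positivity)]
        nlinarith
      have e : |(q - 2) * s ^ (-2 : ℝ) * a * a| = |q - 2| * ((s * s)⁻¹ * a ^ 2) := by
        rw [hsinv, abs_mul, abs_mul, abs_mul, abs_of_nonneg (by positivity : (0:ℝ) ≤ (s*s)⁻¹)]
        rw [mul_assoc, mul_assoc, abs_mul_abs_self]
        ring
      rw [e]
      calc |q - 2| * ((s * s)⁻¹ * a ^ 2) * s ≤ |q - 2| * t ^ 2 * s := by
            nlinarith [abs_nonneg (q - 2), hx0.le,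
              mul_le_mul_of_nonneg_left h1 (abs_nonneg (q - 2))]
        _ = |q - 2| * (t ^ 2 * s) := by ring
    have hA2 : ‖(inner ℂ v v : ℂ).re • x‖ = t ^ 2 * s := by
      rw [norm_smul, hvv, Real.norm_eq_abs, abs_of_nonneg (by positivity), ← hs]
    have hA3 : ‖a • v‖ ≤ s * t * t := by
      rw [norm_smul, Real.norm_eq_abs, ← ht]
      exact mul_le_mul_of_nonneg_right ha (norm_nonneg v)
    have hsum : ‖((q - 2) * s ^ (-2 : ℝ) * a * a) • x + (inner ℂ v v : ℂ).re • x
        + a • v + a • v‖ ≤ (|q - 2| + 3) * (s * t ^ 2) := by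
      calc ‖((q - 2) * s ^ (-2 : ℝ) * a * a) • x + (inner ℂ v v : ℂ).re • x + a • v + a • v‖
          ≤ ‖((q - 2) * s ^ (-2 : ℝ) * a * a) • x‖ + ‖(inner ℂ v v : ℂ).re • x‖
            + ‖a • v‖ + ‖a • v‖ := by
            refine le_trans (norm_add_le _ _) ?_
            have h2 := norm_add_le (((q - 2) * s ^ (-2 : ℝ) * a * a) • x)
              ((inner ℂ v v : ℂ).re • x)
            have h3 := norm_add_le (((q - 2) * s ^ (-2 : ℝ) * a * a) • x
              + (inner ℂ v v : ℂ).re • x) (a • v)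
            linarith
        _ ≤ |q - 2| * (t ^ 2 * s) + t ^ 2 * s + (s * t * t) + (s * t * t) := by
            rw [hA2]; linarith
        _ = (|q - 2| + 3) * (s * t ^ 2) := by ring
    have hP : (0 : ℝ) ≤ s ^ (q - 2) := Real.rpow_nonneg (norm_nonneg x) _
    calc ‖(q * s ^ (q - 2)) • (((q - 2) * s ^ (-2 : ℝ) * a * a) • x
          + (inner ℂ v v : ℂ).re • x + a • v + a • v)‖
        = (q * s ^ (q - 2)) * ‖((q - 2) * s ^ (-2 : ℝ) * a * a) • x
          + (inner ℂ v v : ℂ).re • x + a • v + a • v‖ := by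
          rw [norm_smul, Real.norm_eq_abs, abs_of_nonneg (by positivity)]
      _ ≤ (q * s ^ (q - 2)) * ((|q - 2| + 3) * (s * t ^ 2)) :=
          mul_le_mul_of_nonneg_left hsum (by positivity)
      _ = q * (|q - 2| + 3) * ((s ^ (q - 2) * s) * t ^ 2) := by ring
      _ = q * (|q - 2| + 3) * s ^ (q - 1) * t ^ 2 := by
          rw [← Real.rpow_add_one hx0.ne' (q - 2), show q - 2 + 1 = q - 1 by ring]
          ring
end
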